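/- Let X be a normal Hausdorff space. The following are equivalent: (1) MC(X) with the upper Vietoris topology τ_V⁺ is separable; (2) (MC(X), τ_V⁺) satisfies the countable chain condition (every pairwise disjoint family of nonempty open sets is countable); (3) X is compact and metrizable. -/

import Mathlib

open Set Topology TopologicalSpace

/-- The set of values of a set-valued map (identified with its graph) at a point. -/
def valuesAt {X : Type*} (F : Set (X × ℝ)) (x : X) : Set ℝ := {y | (x, y) ∈ F}

/-- A set-valued map (identified with its graph) is cusco: upper semicontinuous at every
point, with nonempty compact convex values. -/
def IsCusco {X : Type*} [TopologicalSpace X] (F : Set (X × ℝ)) : Prop :=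
  (∀ x : X, ∀ V : Set ℝ, IsOpen V → valuesAt F x ⊆ V →
    ∃ U : Set X, IsOpen U ∧ x ∈ U ∧ ∀ u ∈ U, valuesAt F u ⊆ V) ∧
  (∀ x : X, (valuesAt F x).Nonempty ∧ IsCompact (valuesAt F x) ∧ Convex ℝ (valuesAt F x))

/-- A minimal cusco map, i.e. a cusco map containing no proper cusco submap. -/
def IsMinimalCusco {X : Type*} [TopologicalSpace X] (F : Set (X × ℝ)) : Prop :=
  IsCusco F ∧ ∀ G : Set (X × ℝ), IsCusco G → G ⊆ F → G = F

/-- `L(X)`: all cusco maps from `X` to `ℝ`. -/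
def LSet (X : Type*) [TopologicalSpace X] : Set (Set (X × ℝ)) := {F | IsCusco F}

/-- `L₀(X)`: cusco maps that are single-valued at each isolated point. -/
def L0Set (X : Type*) [TopologicalSpace X] : Set (Set (X × ℝ)) :=
  {F | IsCusco F ∧ ∀ x : X, IsOpen ({x} : Set X) → ∃ y : ℝ, valuesAt F x = {y}}

/-- `MC(X)`: all minimal cusco maps from `X` to `ℝ`. -/
def MCSet (X : Type*) [TopologicalSpace X] : Set (Set (X × ℝ)) := {F | IsMinimalCusco F}

/-- The upper Vietoris topology on a family of subsets of `X × ℝ`. -/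
def upperVietoris {X : Type*} [TopologicalSpace X] (S : Set (Set (X × ℝ))) :
    TopologicalSpace S :=
  .generateFrom {U | ∃ W : Set (X × ℝ), IsOpen W ∧ U = {A : S | (A : Set (X × ℝ)) ⊆ W}}

/-- The Vietoris topology on a family of subsets of `X × ℝ`. -/
def vietoris {X : Type*} [TopologicalSpace X] (S : Set (Set (X × ℝ))) :
    TopologicalSpace S :=
  .generateFrom
    ({U | ∃ W : Set (X × ℝ), IsOpen W ∧ U = {A : S | (A : Set (X × ℝ)) ⊆ W}} ∪
     {U | ∃ W : Set (X × ℝ), IsOpen W ∧ U = {A : S | ((A : Set (X × ℝ)) ∩ W).Nonempty}})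

/-- The graph of a function `X → ℝ`. -/
def graphOf {X : Type*} (f : X → ℝ) : Set (X × ℝ) := {p | p.2 = f p.1}

/-- `X` is countably compact: every countable open cover has a finite subcover. -/
def CountablyCompact (X : Type*) [TopologicalSpace X] : Prop :=
  ∀ U : ℕ → Set X, (∀ n, IsOpen (U n)) → (⋃ n, U n) = Set.univ →
    ∃ t : Finset ℕ, (⋃ n ∈ t, U n) = Set.univ

/-- A topology satisfies the countable chain condition if every pairwise disjoint
family of nonempty open sets is countable. -/
def HasCCC {Y : Type*} (t : TopologicalSpace Y) : Prop :=
  ∀ 𝒞 : Set (Set Y), (∀ U ∈ 𝒞, IsOpen[t] U ∧ U.Nonempty) → 𝒞.PairwiseDisjoint id →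
    𝒞.Countable


set_option linter.unusedSectionVars false
set_option maxHeartbeats 1000000

section AuxLemmas
open BoundedContinuousFunction


variable {X : Type*} [TopologicalSpace X]

lemma valuesAt_graphOf (f : X → ℝ) (x : X) : valuesAt (graphOf f) x = {f x} := by
  ext y; simp [valuesAt, graphOf, eq_comm]

lemma isCusco_graphOf {f : X → ℝ} (hf : Continuous f) : IsCusco (graphOf f) := by
  constructor
  · intro x V hV hsub
    refine ⟨f ⁻¹' V, hV.preimage hf, hsub (by simp [valuesAt_graphOf]), ?_⟩
    intro u hu; rw [valuesAt_graphOf]; simpa using hu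
  · intro x
    rw [valuesAt_graphOf]
    exact ⟨⟨f x, rfl⟩, isCompact_singleton, convex_singleton _⟩

lemma isMinimalCusco_graphOf {f : X → ℝ} (hf : Continuous f) : IsMinimalCusco (graphOf f) := by
  refine ⟨isCusco_graphOf hf, fun G hG hsub => ?_⟩
  refine subset_antisymm hsub fun p hp => ?_
  obtain ⟨y, hy⟩ := (hG.2 p.1).1
  have hyf : y = f p.1 := hsub hy
  have hpf : p.2 = f p.1 := hp
  have hmem : (p.1, p.2) ∈ G := by rw [hpf, ← hyf]; exact hy
  simpa using hmem

lemma hasCCC_of_separableSpace {Y : Type*} (t : TopologicalSpace Y)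
    (h : @SeparableSpace Y t) : HasCCC t := by
  letI := t
  intro 𝒞 hop hdisj
  obtain ⟨s, hsc, hsd⟩ := h.exists_countable_dense
  rcases isEmpty_or_nonempty Y with hY | hY
  · have hsub : 𝒞 ⊆ {∅} := fun U hU => by
      obtain ⟨y, _⟩ := (hop U hU).2
      exact (IsEmpty.false y).elim
    exact (Set.countable_singleton ∅).mono hsub
  · have hch : ∀ U : Set Y, ∃ y : Y, U ∈ 𝒞 → y ∈ U ∩ s := by
      intro U
      by_cases hU : U ∈ 𝒞
      · obtain ⟨y, hy⟩ := hsd.inter_open_nonempty U (hop U hU).1 (hop U hU).2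
        exact ⟨y, fun _ => hy⟩
      · exact ⟨Classical.arbitrary Y, fun h' => absurd h' hU⟩
    choose g hg using hch
    have hmt : MapsTo g 𝒞 s := fun U hU => (hg U hU).2
    have hinj : InjOn g 𝒞 := by
      intro U hU V hV hUV
      by_contra hne
      have hd : Disjoint U V := hdisj hU hV hne
      have h1 : g U ∈ U := (hg U hU).1
      have h2 : g U ∈ V := hUV ▸ (hg V hV).1
      exact Set.disjoint_left.1 hd h1 h2
    exact hmt.countable_of_injOn hinj hsc



lemma valuesAt_eq_Icc {X : Type*} [TopologicalSpace X] {F : Set (X × ℝ)} (hF : IsCusco F)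
    (x : X) : valuesAt F x = Icc (sInf (valuesAt F x)) (sSup (valuesAt F x)) := by
  obtain ⟨hne, hc, hconv⟩ := hF.2 x
  apply subset_antisymm
  · intro y hy
    exact ⟨csInf_le hc.bddBelow hy, le_csSup hc.bddAbove hy⟩
  · exact hconv.ordConnected.out (hc.sInf_mem hne) (hc.sSup_mem hne)

lemma exists_continuous_in_open {X : Type*} [MetricSpace X] [CompactSpace X]
    {F W : Set (X × ℝ)} (hF : IsCusco F) (hW : IsOpen W) (hFW : F ⊆ W) :
    ∃ g : C(X, ℝ), ∀ x, (x, g x) ∈ W := by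
  classical
  set l : X → ℝ := fun x => sInf (valuesAt F x) with hl
  set u : X → ℝ := fun x => sSup (valuesAt F x) with hu
  have hlu : ∀ x, valuesAt F x = Icc (l x) (u x) := fun x => valuesAt_eq_Icc hF x
  have hle : ∀ x, l x ≤ u x := by
    intro x
    have := (hF.2 x).1
    rw [hlu x] at this
    exact nonempty_Icc.1 this
  have hWx : ∀ x, ∀ t ∈ Icc (l x) (u x), (x, t) ∈ W := by
    intro x t ht
    exact hFW (show (x, t) ∈ F from by rw [← hlu x] at ht; exact ht)
  set I : X → Set ℝ := fun x => {y | ∀ t ∈ Icc (min y (l x)) (max y (u x)), (x, t) ∈ W} with hI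
  -- convexity of I x
  have hconv : ∀ x, Convex ℝ (I x) := by
    intro x
    rw [convex_iff_ordConnected]
    constructor
    intro y₁ h₁ y₂ h₂ z hz t ht
    rcases le_or_gt t (max y₁ (u x)) with h | h
    · refine h₁ t ⟨le_trans (min_le_min_right _ hz.1) ht.1, h⟩
    · refine h₂ t ⟨?_, le_trans ht.2 (max_le_max_right _ hz.2)⟩
      calc min y₂ (l x) ≤ l x := min_le_right _ _
        _ ≤ u x := hle x
        _ ≤ max y₁ (u x) := le_max_right _ _
        _ ≤ t := h.le
  -- stability of membership in I
  have key : ∀ (q : ℝ) (x : X), q ∈ I x →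
      ∃ V : Set X, IsOpen V ∧ x ∈ V ∧ ∀ x' ∈ V, q ∈ I x' := by
    intro q x hq
    set A := min q (l x) with hA
    set B := max q (u x) with hB
    have hAB : A ≤ B := le_trans (min_le_left _ _) (le_max_left _ _)
    have hK : IsCompact (({x} : Set X) ×ˢ Icc A B) := isCompact_singleton.prod isCompact_Icc
    have hKW : ({x} : Set X) ×ˢ Icc A B ⊆ W := by
      rintro ⟨a, t⟩ ⟨ha, ht⟩
      rw [mem_singleton_iff] at ha
      subst ha
      exact hq t ht
    obtain ⟨δ, hδpos, hδ⟩ := hK.exists_thickening_subset_open hW hKW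
    obtain ⟨U₁, hU₁o, hxU₁, hU₁⟩ := hF.1 x (Ioo (l x - δ/2) (u x + δ/2)) isOpen_Ioo
      (by rw [hlu x]; exact Icc_subset_Ioo (by linarith) (by linarith))
    refine ⟨U₁ ∩ Metric.ball x (δ/2), hU₁o.inter Metric.isOpen_ball,
      ⟨hxU₁, Metric.mem_ball_self (by linarith)⟩, ?_⟩
    rintro x' ⟨hx'U, hx'b⟩ t ht
    have hsub' : valuesAt F x' ⊆ Ioo (l x - δ/2) (u x + δ/2) := hU₁ x' hx'U
    have hne' := (hF.2 x').1
    have hl' : l x - δ/2 ≤ l x' := le_csInf hne' fun y hy => (hsub' hy).1.le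
    have hu' : u x' ≤ u x + δ/2 := csSup_le hne' fun y hy => (hsub' hy).2.le
    have htlo : A - δ/2 ≤ t := by
      refine le_trans ?_ ht.1
      have : A - δ/2 ≤ min q (l x - δ/2) := by
        refine le_min ?_ ?_
        · have : A ≤ q := min_le_left _ _
          linarith
        · have : A ≤ l x := min_le_right _ _
          linarith
      exact le_trans this (min_le_min_left _ hl')
    have hthi : t ≤ B + δ/2 := by
      refine le_trans ht.2 ?_
      have h1 : max q (u x') ≤ max q (u x + δ/2) := max_le_max_left _ hu'
      have h2 : max q (u x + δ/2) ≤ B + δ/2 := by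
        refine max_le ?_ ?_
        · have : q ≤ B := le_max_left _ _
          linarith
        · have : u x ≤ B := le_max_right _ _
          linarith
      exact le_trans h1 h2
    set t₀ := max A (min t B) with ht₀
    have ht₀mem : t₀ ∈ Icc A B := ⟨le_max_left _ _, max_le hAB (min_le_right _ _)⟩
    have htt₀ : |t - t₀| ≤ δ/2 := by
      rcases lt_or_ge t A with hc | hc
      · have : t₀ = A := by
          rw [ht₀, min_eq_left (le_trans hc.le hAB), max_eq_left hc.le]
        rw [this, abs_sub_comm, abs_of_nonneg (by linarith)]
        linarith
      · rcases le_or_gt t B with hc2 | hc2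
        · have : t₀ = t := by rw [ht₀, min_eq_left hc2, max_eq_right hc]
          rw [this, sub_self, abs_zero]
          linarith
        · have : t₀ = B := by rw [ht₀, min_eq_right hc2.le, max_eq_right hAB]
          rw [this, abs_of_nonneg (by linarith)]
          linarith
    have hmem : (x', t) ∈ Metric.thickening δ (({x} : Set X) ×ˢ Icc A B) := by
      rw [Metric.mem_thickening_iff]
      refine ⟨(x, t₀), ⟨rfl, ht₀mem⟩, ?_⟩
      rw [Prod.dist_eq]
      have h1 : dist x' x < δ/2 := hx'b
      have h2 : dist t t₀ ≤ δ/2 := by rw [Real.dist_eq]; exact htt₀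
      have : max (dist x' x) (dist t t₀) ≤ δ/2 := max_le h1.le h2
      linarith [this]
    exact hδ hmem
  -- each point has a rational in I x
  have hQ : ∀ x : X, ∃ q : ℚ, (q : ℝ) ∈ I x := by
    intro x
    have hK : IsCompact (({x} : Set X) ×ˢ Icc (l x) (u x)) := isCompact_singleton.prod isCompact_Icc
    have hKW : ({x} : Set X) ×ˢ Icc (l x) (u x) ⊆ W := by
      rintro ⟨a, t⟩ ⟨ha, ht⟩
      have ha' : x = a := ha.symm
      subst ha'
      exact hWx x t ht
    obtain ⟨δ, hδpos, hδ⟩ := hK.exists_thickening_subset_open hW hKW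
    obtain ⟨q, hq1, hq2⟩ := exists_rat_btwn (show l x - δ < l x by linarith)
    refine ⟨q, ?_⟩
    intro t ht
    have hminq : min (q : ℝ) (l x) = (q : ℝ) := min_eq_left hq2.le
    have hmaxq : max (q : ℝ) (u x) = u x := max_eq_right (le_trans hq2.le (hle x))
    rw [hminq, hmaxq] at ht
    rcases le_or_gt (l x) t with hc | hc
    · exact hWx x t ⟨hc, ht.2⟩
    · refine hδ ?_
      rw [Metric.mem_thickening_iff]
      refine ⟨(x, l x), ⟨rfl, ⟨le_rfl, hle x⟩⟩, ?_⟩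
      rw [Prod.dist_eq, Real.dist_eq]
      simp only [dist_self]
      have : |t - l x| < δ := by
        rw [abs_of_nonpos (by linarith)]
        have := ht.1
        linarith
      exact max_lt hδpos this
  classical
  set U : ℚ → Set X := fun q => {x | (q : ℝ) ∈ I x} with hUdef
  have hUopen : ∀ q, IsOpen (U q) := by
    intro q
    rw [isOpen_iff_forall_mem_open]
    intro x hx
    obtain ⟨V, hVo, hxV, hV⟩ := key (q : ℝ) x hx
    exact ⟨V, fun x' hx' => hV x' hx', hVo, hxV⟩
  have hcover : (univ : Set X) ⊆ ⋃ q : ℚ, U q := by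
    intro x _
    obtain ⟨q, hq⟩ := hQ x
    exact mem_iUnion.2 ⟨q, hq⟩
  obtain ⟨s, hs⟩ := isCompact_univ.elim_finite_subcover U hUopen hcover
  haveI : Fintype {q : ℚ // q ∈ s} := FinsetCoe.fintype s
  have hcov2 : (univ : Set X) ⊆ ⋃ i : {q : ℚ // q ∈ s}, U i.1 := by
    intro x hx
    have := hs hx
    rw [mem_iUnion₂] at this
    obtain ⟨q, hqs, hq⟩ := this
    exact mem_iUnion.2 ⟨⟨q, hqs⟩, hq⟩
  obtain ⟨ρ, hρ⟩ := PartitionOfUnity.exists_isSubordinate (ι := {q : ℚ // q ∈ s})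
    isClosed_univ (fun i => U i.1) (fun i => hUopen i.1) hcov2
  set g : X → ℝ := fun x => ∑ i : {q : ℚ // q ∈ s}, ρ i x * (i.1 : ℝ) with hg
  have hgc : Continuous g := by
    apply continuous_finset_sum
    intro i _
    exact ((ρ i).continuous).mul continuous_const
  have hgI : ∀ x, g x ∈ I x := by
    intro x
    set s' : Finset {q : ℚ // q ∈ s} := Finset.univ.filter (fun i => ρ i x ≠ 0) with hs'
    have hzero : ∀ i ∈ (Finset.univ : Finset {q : ℚ // q ∈ s}), i ∉ s' → ρ i x = 0 := by
      intro i _ hi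
      by_contra h
      exact hi (Finset.mem_filter.2 ⟨Finset.mem_univ i, h⟩)
    have hsum1 : ∑ i ∈ s', ρ i x = 1 := by
      have h1 : ∑ᶠ i, ρ i x = 1 := ρ.sum_eq_one (mem_univ x)
      rw [finsum_eq_sum_of_fintype] at h1
      rw [← h1]
      exact Finset.sum_subset (Finset.filter_subset _ _) hzero
    have hgx : g x = ∑ i ∈ s', ρ i x * (i.1 : ℝ) := by
      rw [hg]
      refine (Finset.sum_subset (Finset.filter_subset _ _) ?_).symm
      intro i hi hni
      rw [hzero i hi hni, zero_mul]
    rw [hgx]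
    have hm : ∀ i ∈ s', ((i : {q : ℚ // q ∈ s}).1 : ℝ) ∈ I x := by
      intro i hi
      have hne0 : ρ i x ≠ 0 := (Finset.mem_filter.1 hi).2
      have hxs : x ∈ tsupport (ρ i) := subset_tsupport _ (Function.mem_support.2 hne0)
      exact hρ i hxs
    have := (hconv x).sum_mem (fun i _ => ρ.nonneg i x) hsum1 hm
    simpa [smul_eq_mul] using this
  refine ⟨⟨g, hgc⟩, fun x => ?_⟩
  exact hgI x (g x) ⟨min_le_left _ _, le_max_left _ _⟩

lemma upperVietoris_isBasis {X : Type*} [TopologicalSpace X] (S : Set (Set (X × ℝ))) :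
    @IsTopologicalBasis S (upperVietoris S)
      {U | ∃ W : Set (X × ℝ), IsOpen W ∧ U = {A : S | (A : Set (X × ℝ)) ⊆ W}} := by
  letI := upperVietoris S
  refine isTopologicalBasis_of_subbasis_of_finiteInter rfl ?_
  constructor
  · exact ⟨univ, isOpen_univ, by ext A; simp⟩
  · rintro s₁ ⟨W₁, hW₁, rfl⟩ s₂ ⟨W₂, hW₂, rfl⟩
    refine ⟨W₁ ∩ W₂, hW₁.inter hW₂, ?_⟩
    ext A
    simp [subset_inter_iff]

lemma separable_of_compact_metrizable {X : Type*} [TopologicalSpace X] [T2Space X]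
    (hc : CompactSpace X) (hm : MetrizableSpace X) :
    @SeparableSpace _ (upperVietoris (MCSet X)) := by
  haveI := hc
  haveI := hm
  letI mX : MetricSpace X := TopologicalSpace.metrizableSpaceMetric X
  obtain ⟨D, hDc, hDd⟩ := TopologicalSpace.exists_countable_dense C(X, ℝ)
  have hΦmem : ∀ h : C(X, ℝ), graphOf (h : X → ℝ) ∈ MCSet X :=
    fun h => isMinimalCusco_graphOf h.continuous
  letI t := upperVietoris (MCSet X)
  set s : Set (MCSet X) :=
    (fun h : C(X, ℝ) => (⟨graphOf (h : X → ℝ), hΦmem h⟩ : MCSet X)) '' D with hsdef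
  refine ⟨⟨s, hDc.image _, ?_⟩⟩
  rw [(upperVietoris_isBasis (MCSet X)).dense_iff]
  rintro o ⟨W, hW, rfl⟩ ⟨F, hF⟩
  have hFc : IsCusco (F : Set (X × ℝ)) := F.2.1
  have hFW : (F : Set (X × ℝ)) ⊆ W := hF
  obtain ⟨g, hg⟩ := exists_continuous_in_open hFc hW hFW
  have hgraph : graphOf (g : X → ℝ) = (fun x => (x, g x)) '' univ := by
    ext ⟨a, b⟩
    simp only [graphOf, mem_setOf_eq, image_univ, mem_range, Prod.mk.injEq]
    constructor
    · intro h; exact ⟨a, rfl, h.symm⟩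
    · rintro ⟨x, rfl, rfl⟩; rfl
  have hgk : IsCompact (graphOf (g : X → ℝ)) := by
    rw [hgraph]
    exact isCompact_univ.image (continuous_id.prodMk g.continuous)
  have hgW : graphOf (g : X → ℝ) ⊆ W := by
    rintro ⟨a, b⟩ hp
    have hb : b = g a := hp
    rw [hb]
    exact hg a
  obtain ⟨δ, hδpos, hδ⟩ := hgk.exists_thickening_subset_open hW hgW
  obtain ⟨h, hball, hD⟩ := Metric.dense_iff.1 hDd g δ hδpos
  have hhW : graphOf (h : X → ℝ) ⊆ W := by
    rintro ⟨a, b⟩ hp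
    have hb : b = h a := hp
    refine hδ ?_
    rw [Metric.mem_thickening_iff]
    refine ⟨(a, g a), by rw [hgraph]; exact ⟨a, mem_univ a, rfl⟩, ?_⟩
    rw [Prod.dist_eq]
    have h1 : dist b (g a) ≤ dist h g := by
      rw [hb]
      exact ContinuousMap.dist_apply_le_dist a
    have h2 : dist h g < δ := Metric.mem_ball.1 hball
    have h3 : max (dist a a) (dist b (g a)) ≤ max 0 (dist h g) := by
      rw [dist_self]
      exact max_le_max_left _ h1
    exact lt_of_le_of_lt h3 (max_lt hδpos h2)
  exact ⟨⟨graphOf (h : X → ℝ), hΦmem h⟩, hhW, ⟨h, hD, rfl⟩⟩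

lemma separableSpace_of_separated_countable {Y : Type*} [MetricSpace Y]
    (h : ∀ ε : ℝ, 0 < ε → ∀ T : Set Y, (T.Pairwise fun a b => ε ≤ dist a b) → T.Countable) :
    SeparableSpace Y := by
  classical
  have hmax : ∀ n : ℕ, ∃ M : Set Y,
      Maximal (· ∈ {T : Set Y | T.Pairwise fun a b => 1/((n : ℝ)+1) ≤ dist a b}) M := by
    intro n
    apply zorn_subset
    intro c hcS hchain
    refine ⟨⋃₀ c, ?_, fun s hs => subset_sUnion_of_mem hs⟩
    intro a ha b hb hab
    obtain ⟨Ta, hTa, haTa⟩ := ha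
    obtain ⟨Tb, hTb, hbTb⟩ := hb
    rcases hchain.total hTa hTb with hsub | hsub
    · exact hcS hTb (hsub haTa) hbTb hab
    · exact hcS hTa haTa (hsub hbTb) hab
  choose M hM using hmax
  have hMsep : ∀ n, (M n).Pairwise fun a b => 1/((n : ℝ)+1) ≤ dist a b := fun n => (hM n).1
  refine ⟨⟨⋃ n, M n, countable_iUnion (fun n => h _ (by positivity) _ (hMsep n)), ?_⟩⟩
  rw [Metric.dense_iff]
  intro x r hr
  obtain ⟨n, hn⟩ := exists_nat_gt (1/r)
  have hrn : 1/((n : ℝ)+1) < r := by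
    rw [div_lt_iff₀ (by positivity)]
    have h1 : 1/r < (n : ℝ)+1 := lt_trans hn (by linarith)
    have h2 : r * (1/r) < r * ((n : ℝ)+1) := mul_lt_mul_of_pos_left h1 hr
    rw [mul_one_div_cancel (ne_of_gt hr)] at h2
    linarith
  by_cases hx : x ∈ M n
  · exact ⟨x, Metric.mem_ball_self hr, mem_iUnion.2 ⟨n, hx⟩⟩
  · have hnp : ¬ (insert x (M n)).Pairwise (fun a b => 1/((n : ℝ)+1) ≤ dist a b) := by
      intro hctr
      have hsub := (hM n).2 hctr (subset_insert _ _)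
      exact hx (hsub (mem_insert _ _))
    rw [Set.pairwise_insert] at hnp
    push_neg at hnp
    obtain ⟨b, hbM, hbx, hbd⟩ := hnp (hMsep n)
    have hdb : dist x b < 1/((n : ℝ)+1) := by
      rcases lt_or_ge (dist x b) (1/((n : ℝ)+1)) with hc | hc
      · exact hc
      · have := hbd hc
        rw [dist_comm] at this
        exact absurd hc (not_le.2 this)
    exact ⟨b, Metric.mem_ball.2 (by rw [dist_comm]; exact lt_trans hdb hrn),
      mem_iUnion.2 ⟨n, hbM⟩⟩

lemma countable_separated_of_hasCCC {X : Type*} [TopologicalSpace X]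
    (hccc : HasCCC (upperVietoris (MCSet X))) :
    ∀ ε : ℝ, 0 < ε → ∀ T : Set (BoundedContinuousFunction X ℝ),
      (T.Pairwise fun a b => ε ≤ dist a b) → T.Countable := by
  intro ε hε T hT
  letI t := upperVietoris (MCSet X)
  set Φ : (X →ᵇ ℝ) → Set (MCSet X) :=
    fun f => {A : MCSet X | (A : Set (X × ℝ)) ⊆ {p : X × ℝ | |p.2 - f p.1| < ε/3}} with hΦ
  have hWopen : ∀ f : X →ᵇ ℝ, IsOpen {p : X × ℝ | |p.2 - f p.1| < ε/3} := by
    intro f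
    have hcont : Continuous fun p : X × ℝ => |p.2 - f p.1| :=
      (continuous_snd.sub (f.continuous.comp continuous_fst)).abs
    exact isOpen_lt hcont continuous_const
  have hopen : ∀ f, IsOpen[t] (Φ f) :=
    fun f => TopologicalSpace.GenerateOpen.basic _ ⟨_, hWopen f, rfl⟩
  have hne : ∀ f : X →ᵇ ℝ, (Φ f).Nonempty := by
    intro f
    refine ⟨⟨graphOf (f : X → ℝ), isMinimalCusco_graphOf f.continuous⟩, ?_⟩
    rintro ⟨a, b⟩ hp
    have hb : b = f a := hp
    simp only [mem_setOf_eq, hb, sub_self, abs_zero]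
    positivity
  have hdisj : ∀ f g : X →ᵇ ℝ, ε ≤ dist f g → Disjoint (Φ f) (Φ g) := by
    intro f g hfg
    rw [Set.disjoint_left]
    rintro A hAf hAg
    have hpt : ∀ x : X, dist (f x) (g x) ≤ 2*ε/3 := by
      intro x
      obtain ⟨y, hy⟩ := (A.2.1.2 x).1
      have h1 : |y - f x| < ε/3 := hAf hy
      have h2 : |y - g x| < ε/3 := hAg hy
      rw [Real.dist_eq]
      calc |f x - g x| ≤ |f x - y| + |y - g x| := abs_sub_le _ _ _
        _ = |y - f x| + |y - g x| := by rw [abs_sub_comm]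
        _ ≤ 2*ε/3 := by linarith
    have hle : dist f g ≤ 2*ε/3 := (BoundedContinuousFunction.dist_le (by positivity)).2 hpt
    linarith
  have hinj : InjOn Φ T := by
    intro f hf g hg hfg
    by_contra hne'
    have hd : Disjoint (Φ f) (Φ g) := hdisj f g (hT hf hg hne')
    obtain ⟨A, hA⟩ := hne f
    exact Set.disjoint_left.1 hd hA (hfg ▸ hA)
  have hcount : (Φ '' T).Countable := by
    apply hccc
    · rintro U ⟨f, _, rfl⟩
      exact ⟨hopen f, hne f⟩
    · rintro U hU V hV hUV
      obtain ⟨f, hf, rfl⟩ := hU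
      obtain ⟨g, hg, rfl⟩ := hV
      have hfg : f ≠ g := fun h => hUV (by rw [h])
      exact hdisj f g (hT hf hg hfg)
  exact Set.countable_of_injective_of_countable_image hinj hcount

lemma secondCountable_of_bcf_separable {X : Type*} [TopologicalSpace X] [T2Space X]
    [NormalSpace X] (h : SeparableSpace (X →ᵇ ℝ)) : SecondCountableTopology X := by
  obtain ⟨D, hDc, hDd⟩ := TopologicalSpace.exists_countable_dense (X →ᵇ ℝ)
  set B : Set (Set X) := (fun f : X →ᵇ ℝ => {x | 1/2 < f x}) '' D with hB
  have hbasis : IsTopologicalBasis B := by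
    apply isTopologicalBasis_of_isOpen_of_nhds
    · rintro _ ⟨f, _, rfl⟩
      exact isOpen_lt continuous_const f.continuous
    · intro x U hxU hU
      have hclosed : IsClosed Uᶜ := hU.isClosed_compl
      have hdisj : Disjoint Uᶜ ({x} : Set X) := by
        rw [Set.disjoint_singleton_right]
        exact fun hc => hc hxU
      obtain ⟨f, hf0, hf1, hf01⟩ :=
        exists_continuous_zero_one_of_isClosed hclosed isClosed_singleton hdisj
      set fb : X →ᵇ ℝ := ⟨f, 1, fun a b => by
        rw [Real.dist_eq, abs_sub_le_iff]
        simp only [ContinuousMap.toFun_eq_coe]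
        constructor <;> linarith [(hf01 a).1, (hf01 a).2, (hf01 b).1, (hf01 b).2]⟩ with hfb
      obtain ⟨g, hgball, hgD⟩ := Metric.dense_iff.1 hDd fb (1/4) (by norm_num)
      have hdistg : dist g fb < 1/4 := Metric.mem_ball.1 hgball
      refine ⟨{y | 1/2 < g y}, ⟨g, hgD, rfl⟩, ?_, ?_⟩
      · have h1 : dist (g x) (fb x) ≤ dist g fb := dist_coe_le_dist x
        have h2 : fb x = 1 := hf1 rfl
        rw [h2, Real.dist_eq] at h1
        have : |g x - 1| < 1/4 := lt_of_le_of_lt h1 hdistg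
        rw [abs_lt] at this
        simp only [mem_setOf_eq]
        linarith [this.1]
      · intro y hy
        by_contra hyU
        have h0 : fb y = 0 := hf0 hyU
        have h1 : dist (g y) (fb y) ≤ dist g fb := dist_coe_le_dist y
        rw [h0, Real.dist_eq, sub_zero] at h1
        have : |g y| < 1/4 := lt_of_le_of_lt h1 hdistg
        rw [abs_lt] at this
        have hy' : 1/2 < g y := hy
        linarith [this.2]
  exact hbasis.secondCountableTopology (hDc.image _)

lemma compactSpace_of_bcf_separable {X : Type*} [TopologicalSpace X] [T1Space X]
    [NormalSpace X] [SecondCountableTopology X] (h : SeparableSpace (X →ᵇ ℝ)) :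
    CompactSpace X := by
  classical
  by_contra hnc
  rcases isEmpty_or_nonempty X with hE | hE
  · exact hnc inferInstance
  have hnotc : ¬ IsCompact (univ : Set X) := fun hc => hnc ⟨hc⟩
  rw [isCompact_iff_finite_subcover] at hnotc
  push_neg at hnotc
  obtain ⟨ι, U, hUo, hUc, hUnf⟩ := hnotc
  obtain ⟨r, hrc, hrcov⟩ := isLindelof_univ.elim_countable_subcover U hUo hUc
  have hrne : r.Nonempty := by
    rcases Set.eq_empty_or_nonempty r with hre | hrne
    · exfalso
      obtain ⟨a⟩ := hE
      have := hrcov (mem_univ a)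
      simp [hre] at this
    · exact hrne
  obtain ⟨e, hre⟩ := hrc.exists_eq_range hrne
  set V : ℕ → Set X := fun n => U (e n) with hV
  have hVo : ∀ n, IsOpen (V n) := fun n => hUo _
  have hVcov : ∀ a : X, ∃ m, a ∈ V m := by
    intro a
    have hmem := hrcov (mem_univ a)
    rw [mem_iUnion₂] at hmem
    obtain ⟨i, hir, hai⟩ := hmem
    rw [hre] at hir
    obtain ⟨m, rfl⟩ := hir
    exact ⟨m, hai⟩
  have hx : ∀ n : ℕ, ∃ a : X, ∀ k ≤ n, a ∉ V k := by
    intro n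
    by_contra hcon
    push_neg at hcon
    apply hUnf ((Finset.range (n + 1)).image e)
    intro a _
    obtain ⟨k, hkn, hak⟩ := hcon a
    rw [mem_iUnion₂]
    exact ⟨e k, Finset.mem_image_of_mem e (Finset.mem_range.2 (by omega)), hak⟩
  choose x hxn using hx
  set C : Set X := range x with hC
  have hidx : ∀ n m, x n ∈ V m → n < m := by
    intro n m hnm
    by_contra hge
    push_neg at hge
    exact hxn n m hge hnm
  have hfin : ∀ m, C ∩ V m ⊆ x '' {k | k < m} := by
    rintro m y ⟨⟨n, rfl⟩, hyV⟩
    exact ⟨n, hidx n m hyV, rfl⟩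
  have hCc : IsClosed C := by
    rw [← isOpen_compl_iff, isOpen_iff_forall_mem_open]
    intro a ha
    obtain ⟨m, ham⟩ := hVcov a
    have hfinim : (x '' {k | k < m}).Finite := (Set.finite_lt_nat m).image x
    refine ⟨V m \ x '' {k | k < m}, fun y hy => ?_, (hVo m).sdiff hfinim.isClosed, ham, ?_⟩
    · intro hyC
      exact hy.2 (hfin m ⟨hyC, hy.1⟩)
    · intro haim
      obtain ⟨k, _, rfl⟩ := haim
      exact ha ⟨k, rfl⟩
  have hCdisc : DiscreteTopology C := by
    rw [discreteTopology_iff_isOpen_singleton]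
    rintro ⟨a, hac⟩
    obtain ⟨n0, rfl⟩ := hac
    obtain ⟨m, ham⟩ := hVcov (x n0)
    set O : Set X := V m \ x '' {k | k < m ∧ x k ≠ x n0} with hO
    have hfinim : (x '' {k | k < m ∧ x k ≠ x n0}).Finite :=
      ((Set.finite_lt_nat m).subset (fun k hk => hk.1)).image x
    have hOopen : IsOpen O := (hVo m).sdiff hfinim.isClosed
    have heq : ({⟨x n0, ⟨n0, rfl⟩⟩} : Set C) = (Subtype.val ⁻¹' O : Set C) := by
      ext c
      simp only [mem_singleton_iff, mem_preimage]
      constructor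
      · rintro rfl
        refine ⟨ham, ?_⟩
        rintro ⟨k, ⟨_, hkne⟩, hkeq⟩
        exact hkne hkeq
      · intro hcO
        obtain ⟨n, hn⟩ := c.2
        apply Subtype.ext
        have hnm : n < m := hidx n m (by rw [hn]; exact hcO.1)
        by_contra hne
        have hne' : x n ≠ x n0 := by
          rw [hn]
          intro hval
          exact hne hval
        exact hcO.2 ⟨n, ⟨hnm, hne'⟩, hn⟩
    rw [heq]
    exact hOopen.preimage continuous_subtype_val
  have hCinf : C.Infinite := by
    intro hCfin
    have hfibers : ∀ a : X, ({n : ℕ | x n = a}).Finite := by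
      intro a
      obtain ⟨m, ham⟩ := hVcov a
      refine (Set.finite_lt_nat m).subset ?_
      intro n hn
      exact hidx n m (by rw [hn]; exact ham)
    have huniv : (univ : Set ℕ) ⊆ ⋃ a ∈ C, {n : ℕ | x n = a} := by
      intro n _
      rw [mem_iUnion₂]
      exact ⟨x n, ⟨n, rfl⟩, rfl⟩
    have : (univ : Set ℕ).Finite := ((hCfin.biUnion fun a _ => hfibers a).subset huniv)
    exact Set.infinite_univ this
  set em : ℕ ↪ ↥C := Set.Infinite.natEmbedding C hCinf with hem
  have hbcf : ∀ S : Set ℕ, ∃ gS : X →ᵇ ℝ,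
      ∀ n : ℕ, gS ((em n : ↥C) : X) = if n ∈ S then 3 else 0 := by
    intro S
    set χ : ↥C → ℝ := fun c => if ∃ n ∈ S, em n = c then 3 else 0 with hχ
    have hχc : Continuous χ := continuous_of_discreteTopology
    have hbd : ∀ a b : ↥C, dist (χ a) (χ b) ≤ 3 := by
      intro a b
      rw [Real.dist_eq]
      have ha : χ a = if ∃ n ∈ S, em n = a then 3 else 0 := rfl
      have hb : χ b = if ∃ n ∈ S, em n = b then 3 else 0 := rfl
      rw [ha, hb]
      split_ifs <;> norm_num
    obtain ⟨g, hgnorm, hgext⟩ :=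
      BoundedContinuousFunction.exists_extension_norm_eq_of_isClosedEmbedding
        (⟨⟨χ, hχc⟩, 3, hbd⟩ : ↥C →ᵇ ℝ) hCc.isClosedEmbedding_subtypeVal
    refine ⟨g, fun n => ?_⟩
    have hgval : g ((em n : ↥C) : X) = χ (em n) := congrFun hgext (em n)
    have hχval : χ (em n) = if ∃ m ∈ S, em m = em n then 3 else 0 := rfl
    rw [hgval, hχval]
    by_cases hnS : n ∈ S
    · rw [if_pos, if_pos hnS]
      exact ⟨n, hnS, rfl⟩
    · rw [if_neg, if_neg hnS]
      rintro ⟨m, hmS, hme⟩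
      exact hnS (em.injective hme ▸ hmS)
  choose g hg using hbcf
  have hsep : ∀ S T : Set ℕ, S ≠ T → 3 ≤ dist (g S) (g T) := by
    intro S T hST
    have hdiff : ∃ n, (n ∈ S ∧ n ∉ T) ∨ (n ∈ T ∧ n ∉ S) := by
      by_contra hcon
      push_neg at hcon
      apply hST
      ext n
      have h1 := (hcon n).1
      have h2 := (hcon n).2
      exact ⟨fun hns => h1 hns, fun hnt => h2 hnt⟩
    obtain ⟨n, hcase⟩ := hdiff
    have key : ∀ A B : Set ℕ, n ∈ A → n ∉ B → 3 ≤ dist (g A) (g B) := by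
      intro A B hA hB
      have h1 : dist (g A ((em n : ↥C) : X)) (g B ((em n : ↥C) : X)) ≤ dist (g A) (g B) :=
        dist_coe_le_dist _
      rw [hg A n, hg B n, if_pos hA, if_neg hB, Real.dist_eq] at h1
      have h2 : |(3 : ℝ) - 0| = 3 := by norm_num
      rw [h2] at h1
      exact h1
    rcases hcase with ⟨h1, h2⟩ | ⟨h1, h2⟩
    · exact key S T h1 h2
    · rw [dist_comm]
      exact key T S h1 h2
  obtain ⟨D, hDc, hDd⟩ := TopologicalSpace.exists_countable_dense (X →ᵇ ℝ)
  have hpick : ∀ S : Set ℕ, ∃ dd : X →ᵇ ℝ, dd ∈ D ∧ dist (g S) dd < 3/2 := by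
    intro S
    obtain ⟨dd, hdb, hdD⟩ := Metric.dense_iff.1 hDd (g S) (3/2) (by norm_num)
    exact ⟨dd, hdD, by rw [dist_comm]; exact Metric.mem_ball.1 hdb⟩
  choose d hdD hdist using hpick
  have hdinj : Function.Injective d := by
    intro S T hST
    by_contra hne
    have h3 := hsep S T hne
    have h4 : dist (g S) (g T) ≤ dist (g S) (d S) + dist (d S) (g T) := dist_triangle _ _ _
    rw [hST, dist_comm (d T) (g T)] at h4
    have hd1 := hdist S
    rw [hST] at hd1
    have hd2 : dist (g T) (d T) < 3/2 := hdist T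
    linarith
  haveI : Countable ↥D := hDc.to_subtype
  have hcnt : Countable (Set ℕ) :=
    Function.Injective.countable (f := fun S : Set ℕ => (⟨d S, hdD S⟩ : ↥D))
      (fun S T hST => hdinj (Subtype.ext_iff.1 hST))
  obtain ⟨fn, hfn⟩ := Countable.exists_injective_nat (Set ℕ)
  exact Function.cantor_injective fn hfn

end AuxLemmas

/-- For a normal Hausdorff space `X`, the following are equivalent: `(MC(X), τ_V⁺)` is
separable; `(MC(X), τ_V⁺)` satisfies the countable chain condition; `X` is compact and
metrizable. -/
theorem MCSet_upperVietoris_separable_tfae {X : Type*} [TopologicalSpace X] [T2Space X]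
    [NormalSpace X] :
    List.TFAE
      [@SeparableSpace _ (upperVietoris (MCSet X)),
       HasCCC (upperVietoris (MCSet X)),
       CompactSpace X ∧ MetrizableSpace X] := by
  tfae_have 1 → 2
  · exact fun h1 => hasCCC_of_separableSpace _ h1
  tfae_have 2 → 3
  · intro h2
    have hsepB : SeparableSpace (BoundedContinuousFunction X ℝ) :=
      separableSpace_of_separated_countable (countable_separated_of_hasCCC h2)
    haveI hsc : SecondCountableTopology X := secondCountable_of_bcf_separable hsepB
    haveI : T4Space X := ⟨⟩
    haveI hmet : MetrizableSpace X := inferInstance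
    exact ⟨compactSpace_of_bcf_separable hsepB, hmet⟩
  tfae_have 3 → 1
  · rintro ⟨hc, hm⟩
    exact separable_of_compact_metrizable hc hm
  tfae_finish
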